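/- Let H be a finite nonempty type, let p : H → ℝ≥0 with ∑ h, p h = 1, and let h* be the unique maximizer of p. Fix m ≥ 2 and d ≥ 1, and define q : H × (Fin d → Fin m) → ℝ≥0 by q (h, f) = p h / m if f is a constant function, and q (h, f) = 0 otherwise. Then ∑ (h,f), q (h, f) = 1, and the set of global maximizers of q is exactly {(h*, fun _ => i) : i ∈ Fin m}, which has cardinality m. (This is the correctness of the paper's reduction gadget for (m,d)-Dissimilar Partial MAP: a chain of d−1 nodes each deterministically copying the value of the uniform node M, all added to the explanation set, yields exactly m equally most-probable explanations.) -/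

import Mathlib

open scoped NNReal Classical

/-- Correctness of the `(m,d)`-Dissimilar Partial MAP reduction gadget: a chain of
`d-1` nodes each deterministically copying the value of the uniform `m`-valued node,
all added to the explanation set, yields exactly `m` equally most-probable
explanations.  Formally: if `p : H → ℝ≥0` sums to `1` with unique maximizer `hstar`,
and `q (h, f) = p h / m` when `f : Fin d → Fin m` is constant and `0` otherwise,
then `q` sums to `1` and its set of global maximizers is exactly
`{(hstar, fun _ => i) | i : Fin m}`, of cardinality `m`. -/
theorem dissimilar_gadget_correct {H : Type*} [Fintype H] [Nonempty H]
    (p : H → ℝ≥0) (hp : ∑ h, p h = 1)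
    (hstar : H) (hmax : ∀ h : H, h ≠ hstar → p h < p hstar)
    (m d : ℕ) (hm : 2 ≤ m) (hd : 1 ≤ d)
    (q : H × (Fin d → Fin m) → ℝ≥0)
    (hq : ∀ x : H × (Fin d → Fin m),
      q x = if ∀ i j : Fin d, x.2 i = x.2 j then p x.1 / (m : ℝ≥0) else 0) :
    (∑ x : H × (Fin d → Fin m), q x = 1) ∧
    ({x : H × (Fin d → Fin m) | ∀ y : H × (Fin d → Fin m), q y ≤ q x}
        = {x : H × (Fin d → Fin m) | ∃ i : Fin m, x = (hstar, fun _ => i)}) ∧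
    {x : H × (Fin d → Fin m) | ∀ y : H × (Fin d → Fin m), q y ≤ q x}.ncard = m := by
  have hm0 : (0 : ℝ≥0) < (m : ℝ≥0) := by
    have : 0 < m := by omega
    exact_mod_cast this
  have hmpos : 0 < m := by omega
  set z : Fin d := ⟨0, hd⟩ with hz
  -- constant functions filter is image
  have hfilter : (Finset.univ.filter (fun f : Fin d → Fin m => ∀ i j, f i = f j))
      = Finset.univ.image (fun c : Fin m => (fun _ => c : Fin d → Fin m)) := by
    ext f
    simp only [Finset.mem_filter, Finset.mem_image, Finset.mem_univ, true_and]
    constructor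
    · intro hc
      exact ⟨f z, by funext i; exact (hc z i)⟩
    · rintro ⟨c, rfl⟩ i j; rfl
  have hinjc : Function.Injective (fun c : Fin m => (fun _ => c : Fin d → Fin m)) := by
    intro a b hab
    exact congrFun hab z
  have hcard : (Finset.univ.filter (fun f : Fin d → Fin m => ∀ i j, f i = f j)).card = m := by
    rw [hfilter, Finset.card_image_of_injective _ hinjc, Finset.card_univ, Fintype.card_fin]
  -- sum
  have hsum : ∑ x : H × (Fin d → Fin m), q x = 1 := by
    rw [Fintype.sum_prod_type]
    have : ∀ h : H, ∑ f : Fin d → Fin m, q (h, f) = p h := by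
      intro h
      have : ∑ f : Fin d → Fin m, q (h, f)
          = ∑ f ∈ Finset.univ.filter (fun f : Fin d → Fin m => ∀ i j, f i = f j),
              p h / (m : ℝ≥0) := by
        rw [Finset.sum_filter]
        exact Finset.sum_congr rfl (fun f _ => hq (h, f))
      rw [this, Finset.sum_const, hcard, nsmul_eq_mul, mul_div_cancel₀ _ hm0.ne']
    simp only [this, hp]
  -- p hstar > 0
  have hpstar : 0 < p hstar := by
    obtain ⟨h0, -, h0ne⟩ := Finset.exists_ne_zero_of_sum_ne_zero (by rw [hp]; norm_num :
      ∑ h, p h ≠ 0)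
    rcases eq_or_ne h0 hstar with rfl | hne
    · exact pos_iff_ne_zero.mpr h0ne
    · exact lt_of_le_of_lt zero_le (hmax h0 hne)
  have hqstar : ∀ i : Fin m, q (hstar, fun _ => i) = p hstar / (m : ℝ≥0) := by
    intro i
    rw [hq]
    simp
  have hle : ∀ y : H × (Fin d → Fin m), q y ≤ p hstar / (m : ℝ≥0) := by
    intro y
    rw [hq]
    split
    · gcongr
      rcases eq_or_ne y.1 hstar with h | h
      · rw [h]
      · exact (hmax y.1 h).le
    · exact zero_le
  -- set equality
  have hset : {x : H × (Fin d → Fin m) | ∀ y : H × (Fin d → Fin m), q y ≤ q x}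
      = {x : H × (Fin d → Fin m) | ∃ i : Fin m, x = (hstar, fun _ => i)} := by
    ext x
    simp only [Set.mem_setOf_eq]
    constructor
    · intro hx
      have hge : p hstar / (m : ℝ≥0) ≤ q x := by
        have h0 := hx (hstar, fun _ => (⟨0, hmpos⟩ : Fin m))
        rwa [hqstar] at h0
      have hpos : 0 < q x := lt_of_lt_of_le (div_pos hpstar hm0) hge
      have hconst : ∀ i j : Fin d, x.2 i = x.2 j := by
        by_contra hc
        rw [hq x, if_neg hc] at hpos
        exact lt_irrefl _ hpos
      have hqx : q x = p x.1 / (m : ℝ≥0) := by rw [hq x, if_pos hconst]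
      have hx1 : x.1 = hstar := by
        by_contra hne
        have hlt : q x < q x := by
          calc q x = p x.1 / (m : ℝ≥0) := hqx
            _ < p hstar / (m : ℝ≥0) := by
                gcongr
                exact hmax x.1 hne
            _ ≤ q x := hge
        exact lt_irrefl _ hlt
      refine ⟨x.2 z, ?_⟩
      have : x.2 = fun _ => x.2 z := funext fun i => hconst i z
      rw [← hx1, ← this]
    · rintro ⟨i, rfl⟩ y
      rw [hqstar i]
      exact hle y
  refine ⟨hsum, hset, ?_⟩
  rw [hset]
  have : {x : H × (Fin d → Fin m) | ∃ i : Fin m, x = (hstar, fun _ => i)}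
      = (fun i : Fin m => ((hstar, fun _ => i) : H × (Fin d → Fin m))) '' Set.univ := by
    ext x
    simp [eq_comm]
  rw [this, Set.ncard_image_of_injective _ (fun a b hab => hinjc (congrArg Prod.snd hab)),
    Set.ncard_univ, Nat.card_eq_fintype_card, Fintype.card_fin]
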